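/- For a subset A of an infinite group G and n a positive natural number, A is not n-thin if and only if there exist a subset F of G with exactly n+1 elements and an injective sequence (x_m)_{m in omega} in G such that F x_m ⊆ A for each m in omega. -/

import Mathlib

open Pointwise

/-- A subset `A` of a group `G` is `n`-thin if for any pairwise distinct
`g 0, …, g n` the set `g 0 • A ∩ … ∩ g n • A` is finite. -/
def IsNThinSub {G : Type*} [Group G] (n : ℕ) (A : Set G) : Prop :=
  ∀ g : Fin (n + 1) → G, Function.Injective g → (⋂ i, g i • A).Finite

/-- For a subset `A` of an infinite group `G` and `0 < n`, `A` is not `n`-thin iff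
there exist a set `F ⊆ G` with exactly `n + 1` elements and an injective sequence
`(x m)` in `G` with `F * x m ⊆ A` for all `m`. -/
theorem not_nthin_iff_finset_translates
    {G : Type*} [Group G] [Infinite G] (A : Set G) (n : ℕ) (hn : 0 < n) :
    ¬ IsNThinSub n A ↔
      ∃ F : Finset G, F.card = n + 1 ∧
        ∃ x : ℕ → G, Function.Injective x ∧
          ∀ m : ℕ, (F : Set G) * ({x m} : Set G) ⊆ A := by
  constructor
  · classical
    intro h
    rw [IsNThinSub] at h
    push_neg at h
    obtain ⟨g, hg, hinf⟩ := h
    set I := ⋂ i, g i • A with hI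
    refine ⟨Finset.univ.image (fun i => (g i)⁻¹), ?_, ?_⟩
    · rw [Finset.card_image_of_injective _ (fun a b hab => hg (inv_injective hab)),
        Finset.card_univ, Fintype.card_fin]
    · let e := hinf.natEmbedding
      refine ⟨fun m => (e m : G), fun a b hab => e.injective (Subtype.ext hab), ?_⟩
      intro m y hy
      obtain ⟨f, hf, z, hz, rfl⟩ := Set.mem_mul.mp hy
      simp only [Finset.coe_image, Finset.coe_univ, Set.image_univ, Set.mem_range] at hf
      obtain ⟨i, rfl⟩ := hf
      rw [Set.mem_singleton_iff] at hz
      subst hz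
      have hm := Set.mem_iInter.mp (e m).2 i
      rwa [Set.mem_smul_set_iff_inv_smul_mem] at hm
  · rintro ⟨F, hF, x, hx, hFx⟩
    intro h
    let eq := F.equivFinOfCardEq hF
    set g : Fin (n + 1) → G := fun i => ((eq.symm i : G))⁻¹ with hg
    have hginj : Function.Injective g := by
      intro a b hab
      exact eq.symm.injective (Subtype.ext (inv_injective hab))
    have hmem : ∀ m, x m ∈ ⋂ i, g i • A := by
      intro m
      rw [Set.mem_iInter]
      intro i
      rw [hg, Set.mem_inv_smul_set_iff]
      exact hFx m (Set.mul_mem_mul (eq.symm i).2 rfl)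
    exact Set.infinite_of_injective_forall_mem hx hmem (h g hginj)
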